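/- Let N be a 3-prime zero-symmetric left near-ring and d a nonzero multiplicative derivation of N such that d([x,y]) = [d(x), y] for all x, y ∈ N, where [a,b] = ab − ba. Then N is a commutative ring (multiplication is commutative and (N,+) is abelian). -/
import Mathlib


class LeftNearRing (N : Type*) extends AddGroup N, Mul N where
  mul_assoc : ∀ a b c : N, a * b * c = a * (b * c)
  left_distrib : ∀ a b c : N, a * (b + c) = a * b + a * c

theorem stmt8 {N : Type*} [LeftNearRing N]
    (hzs : ∀ x : N, 0 * x = 0)
    (hp : ∀ a b : N, (∀ n : N, a * n * b = 0) → a = 0 ∨ b = 0)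
    (d : N → N) (hd : ∀ x y : N, d (x * y) = x * d y + d x * y)
    (hd0 : ∃ x : N, d x ≠ 0)
    (hc : ∀ x y : N, d (x * y - y * x) = d x * y - y * d x) :
    (∀ x y : N, x * y = y * x) ∧ (∀ x y : N, x + y = y + x) := by
  have ma := LeftNearRing.mul_assoc (N := N)
  have ld := LeftNearRing.left_distrib (N := N)
  -- a * 0 = 0
  have mz : ∀ a : N, a * 0 = 0 := by
    intro a
    have h := ld a 0 0
    rw [add_zero] at h
    exact (left_eq_add.mp h)
  -- a * (b - c) = a * b - a * c
  have msub : ∀ a b c : N, a * (b - c) = a * b - a * c := by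
    intro a b c
    have h : a * (b - c) + a * c = a * b := by rw [← ld, sub_add_cancel]
    exact eq_sub_of_add_eq h
  -- d 0 = 0
  have d0 : d 0 = 0 := by
    have h := hd 0 0
    simp only [hzs, mz, add_zero, zero_add] at h
    exact h
  -- d x * x = x * d x
  have star : ∀ x : N, d x * x = x * d x := by
    intro x
    have h := hc x x
    rw [sub_self, d0] at h
    exact sub_eq_zero.mp h.symm
  -- (d x * y) * x = x * (d x * y)
  have star2 : ∀ x y : N, d x * y * x = x * (d x * y) := by
    intro x y
    have h2 : x * (x * y) - (x * y) * x = x * (x * y - y * x) := by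
      rw [msub, ma x y x]
    have h := hc x (x * y)
    rw [h2, hd, hc] at h
    -- h : x * (d x * y - y * d x) + d x * (x * y - y * x)
    --     = d x * (x * y) - x * y * d x
    rw [msub, msub] at h
    -- normalize the products
    have e1 : x * (y * d x) = x * y * d x := (ma x y (d x)).symm
    have e2 : d x * (x * y) = x * (d x * y) := by
      rw [← ma, star, ma]
    have e3 : d x * (y * x) = d x * y * x := (ma (d x) y x).symm
    rw [e1, e2, e3] at h
    -- h : (x*(dx*y) - x*y*dx) + (x*(dx*y) - dx*y*x) = x*(dx*y) - x*y*dx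
    have h' : (x * (d x * y) - x * y * d x) + (x * (d x * y) - d x * y * x)
        = (x * (d x * y) - x * y * d x) + 0 := by rw [add_zero]; exact h
    have h'' := add_left_cancel h'
    exact (sub_eq_zero.mp h'').symm
  -- d x * n * (z * x - x * z) = 0
  have star3 : ∀ x n z : N, d x * n * (z * x - x * z) = 0 := by
    intro x n z
    have key : d x * n * (z * x) = d x * n * (x * z) := by
      calc d x * n * (z * x) = d x * n * z * x := by rw [ma (d x * n) z x]
        _ = d x * (n * z) * x := by rw [ma (d x) n z]
        _ = x * (d x * (n * z)) := star2 x (n * z)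
        _ = x * (d x * n * z) := by rw [ma (d x) n z]
        _ = x * (d x * n) * z := by rw [ma x (d x * n) z]
        _ = d x * n * x * z := by rw [star2 x n]
        _ = d x * n * (x * z) := by rw [ma (d x * n) x z]
    rw [msub, key, sub_self]
  -- if d x ≠ 0 then x is central
  have central : ∀ x : N, d x ≠ 0 → ∀ z : N, z * x = x * z := by
    intro x hx z
    rcases hp (d x) (z * x - x * z) (fun n => star3 x n z) with h | h
    · exact absurd h hx
    · exact sub_eq_zero.mp h
  obtain ⟨c, hcne⟩ := hd0
  have ccen : ∀ z : N, z * c = c * z := central c hcne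
  -- d c is central
  have ucen : ∀ y : N, d c * y = y * d c := by
    intro y
    have h := hc c y
    rw [← ccen y, sub_self, d0] at h
    exact sub_eq_zero.mp h.symm
  -- d c annihilates only 0
  have hud : ∀ t : N, d c * t = 0 → t = 0 := by
    intro t ht
    rcases hp (d c) t (fun n => by rw [ucen n, ma, ht, mz]) with h | h
    · exact absurd h hcne
    · exact h
  have hcne0 : c ≠ 0 := fun h => hcne (by rw [h, d0])
  -- c annihilates only 0
  have hcd : ∀ t : N, c * t = 0 → t = 0 := by
    intro t ht
    rcases hp c t (fun n => by rw [← ccen n, ma, ht, mz]) with h | h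
    · exact absurd h hcne0
    · exact h
  -- multiplication is commutative
  have mulcomm : ∀ x z : N, x * z = z * x := by
    intro x z
    by_cases hx : d x = 0
    · by_cases hcx : d c * x = 0
      · have hx0 : x = 0 := hud x hcx
        rw [hx0, hzs, mz]
      · have hdcx : d (c * x) ≠ 0 := by
          rw [hd, hx, mz, zero_add]; exact hcx
        have h := central (c * x) hdcx z
        -- z * (c * x) = (c * x) * z
        have h1 : c * (z * x) = c * (x * z) := by
          calc c * (z * x) = c * z * x := (ma c z x).symm
            _ = z * c * x := (ccen z ▸ rfl)
            _ = z * (c * x) := ma z c x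
            _ = c * x * z := h
            _ = c * (x * z) := ma c x z
        have h2 : c * (z * x - x * z) = 0 := by rw [msub, h1, sub_self]
        have h3 := hcd _ h2
        exact (sub_eq_zero.mp h3).symm
    · exact (central x hx z).symm
  -- right distributivity
  have rdist : ∀ a b t : N, (a + b) * t = a * t + b * t := by
    intro a b t
    rw [mulcomm (a + b) t, ld, mulcomm t a, mulcomm t b]
  -- medial-type lemma: b*x + a*y = a*y + b*x
  have medial : ∀ a b x y : N, b * x + a * y = a * y + b * x := by
    intro a b x y
    have E1 : (a + b) * (x + y) = (a * x + b * x) + (a * y + b * y) := by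
      rw [ld, rdist, rdist]
    have E2 : (a + b) * (x + y) = (a * x + a * y) + (b * x + b * y) := by
      rw [rdist, ld, ld]
    have E := E1.symm.trans E2
    rw [add_assoc, add_assoc] at E
    have E' := add_left_cancel E
    rw [← add_assoc, ← add_assoc] at E'
    exact add_right_cancel E'
  refine ⟨mulcomm, ?_⟩
  intro x y
  have h : d c * (x + y) = d c * (y + x) := by
    rw [ld, ld]; exact medial (d c) (d c) x y
  have h2 : d c * ((x + y) - (y + x)) = 0 := by rw [msub, h, sub_self]
  exact sub_eq_zero.mp (hud _ h2)
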